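/- Let f be a convex continuous function on an interval I containing 0 with f(0) ≤ 0. For real symmetric m×m matrices B_1,...,B_n with spectra in I and m×m matrices A_1,...,A_n with Σ A_iᵀA_i ⪯ Id, we have tr f(Σᵢ A_iᵀ B_i A_i) ≤ tr(Σᵢ A_iᵀ f(B_i) A_i). -/

import Mathlib

open Matrix

theorem jensen_operator_trace
    {m n : ℕ} (I : Set ℝ) (hI : Convex ℝ I) (h0 : (0 : ℝ) ∈ I)
    (f : ℝ → ℝ) (hconv : ConvexOn ℝ I f) (hcont : ContinuousOn f I)
    (hf0 : f 0 ≤ 0)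
    (B : Fin n → Matrix (Fin m) (Fin m) ℝ) (hB : ∀ i, (B i).IsHermitian)
    (hspec : ∀ i, spectrum ℝ (B i) ⊆ I)
    (A : Fin n → Matrix (Fin m) (Fin m) ℝ)
    (hA : ((1 : Matrix (Fin m) (Fin m) ℝ) - ∑ i, (A i)ᵀ * A i).PosSemidef)
    (hsum : (∑ i, (A i)ᵀ * B i * A i).IsHermitian) :
    (hsum.cfc f).trace ≤ (∑ i, (A i)ᵀ * (hB i).cfc f * A i).trace := by
  classical
  set U : Matrix (Fin m) (Fin m) ℝ := (hsum.eigenvectorUnitary : Matrix (Fin m) (Fin m) ℝ) with hUdef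
  set V : Fin n → Matrix (Fin m) (Fin m) ℝ := fun i => ((hB i).eigenvectorUnitary : Matrix (Fin m) (Fin m) ℝ) with hVdef
  set lam : Fin m → ℝ := hsum.eigenvalues with hlamdef
  set mu : Fin n → Fin m → ℝ := fun i => (hB i).eigenvalues with hmudef
  set G : Fin n → Matrix (Fin m) (Fin m) ℝ := fun i => star (V i) * (A i * U) with hGdef
  have hUU : star U * U = 1 := Unitary.coe_star_mul_self hsum.eigenvectorUnitary
  have hUU' : U * star U = 1 := Unitary.coe_mul_star_self hsum.eigenvectorUnitary
  have hVV' : ∀ i, V i * star (V i) = 1 := fun i =>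
    Unitary.coe_mul_star_self (hB i).eigenvectorUnitary
  -- entrywise quadratic form lemma
  have entry : ∀ (X : Matrix (Fin m) (Fin m) ℝ) (d : Fin m → ℝ) (k : Fin m),
      (star X * (diagonal d * X)) k k = ∑ j, d j * (X j k)^2 := by
    intro X d k
    simp [Matrix.mul_apply, diagonal_apply, ite_mul, sq, star_eq_conjTranspose,
      conjTranspose_apply]
    exact Finset.sum_congr rfl fun j _ => by ring
  -- conjugation identity
  have key : ∀ (i : Fin n) (d : Fin m → ℝ),
      star U * ((A i)ᵀ * (V i * diagonal d * star (V i)) * A i) * U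
        = star (G i) * (diagonal d * G i) := by
    intro i d
    have hAt : (A i)ᵀ = star (A i) := rfl
    simp only [hGdef, StarMul.star_mul, star_star, hAt, Matrix.mul_assoc]
  -- diagonal of PSD nonneg
  have diag_nonneg : ∀ (M : Matrix (Fin m) (Fin m) ℝ), M.PosSemidef → ∀ k, 0 ≤ M k k := by
    intro M hM k
    exact hM.diag_nonneg
  -- LHS trace
  have hLHS : (hsum.cfc f).trace = ∑ k, f (lam k) := by
    show (U * diagonal (RCLike.ofReal ∘ f ∘ lam) * star U).trace = _
    rw [trace_mul_cycle, hUU, Matrix.one_mul, trace_diagonal]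
    rfl
  -- lam as mixture
  have hlam : ∀ k, lam k = ∑ i, ∑ j, mu i j * (G i j k)^2 := by
    intro k
    have hdiag : star U * (∑ i, (A i)ᵀ * B i * A i) * U = diagonal (RCLike.ofReal ∘ lam) := by
      have := hsum.conjStarAlgAut_star_eigenvectorUnitary
      rw [Unitary.conjStarAlgAut_apply, Unitary.coe_star, star_star] at this
      exact this
    have h1 : (star U * ((∑ i, (A i)ᵀ * B i * A i)) * U) k k = lam k := by
      rw [hdiag]; simp [diagonal_apply]
    rw [← h1]
    have h2 : star U * ((∑ i, (A i)ᵀ * B i * A i)) * U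
        = ∑ i, star U * ((A i)ᵀ * B i * A i) * U := by
      simp [Finset.mul_sum, Finset.sum_mul]
    rw [h2]
    rw [Matrix.sum_apply]
    refine Finset.sum_congr rfl fun i _ => ?_
    have : star U * ((A i)ᵀ * B i * A i) * U = star (G i) * (diagonal (mu i) * G i) := by
      conv_lhs => rw [(hB i).spectral_theorem]
      exact key i (mu i)
    rw [this, entry]
  -- weight bound
  have hwt : ∀ k, ∑ i, ∑ j, (G i j k)^2 ≤ 1 := by
    intro k
    have hGG : ∀ i, star (G i) * G i = star U * ((A i)ᵀ * A i) * U := by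
      intro i
      have hAt : (A i)ᵀ = star (A i) := rfl
      calc star (G i) * G i = star U * (star (A i) * ((V i * star (V i)) * (A i * U))) := by
            simp only [hGdef, StarMul.star_mul, star_star, Matrix.mul_assoc]
        _ = star U * ((A i)ᵀ * A i) * U := by
            rw [hVV' i, Matrix.one_mul, hAt]; simp only [Matrix.mul_assoc]
    have hsq : ∀ i, ∑ j, (G i j k)^2 = (star U * ((A i)ᵀ * A i) * U) k k := by
      intro i
      have := entry (G i) (fun _ => 1) k
      simp only [diagonal_one, Matrix.one_mul, one_mul] at this
      rw [← this, ← hGG i]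
    have hS : ∑ i, (star U * ((A i)ᵀ * A i) * U) k k
        = (star U * (∑ i, (A i)ᵀ * A i) * U) k k := by
      rw [Finset.mul_sum, Finset.sum_mul, Matrix.sum_apply]
    have hP : (star U * ((1 : Matrix (Fin m) (Fin m) ℝ) - ∑ i, (A i)ᵀ * A i) * U).PosSemidef := by
      have := hA.conjTranspose_mul_mul_same U
      simpa [star_eq_conjTranspose] using this
    have hpos := diag_nonneg _ hP k
    have hone : (star U * (1 : Matrix (Fin m) (Fin m) ℝ) * U) k k = 1 := by
      rw [Matrix.mul_one, hUU]; simp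
    rw [Matrix.mul_sub, Matrix.sub_mul, Matrix.sub_apply, hone] at hpos
    calc ∑ i, ∑ j, (G i j k)^2 = (star U * (∑ i, (A i)ᵀ * A i) * U) k k := by
          rw [← hS]; exact Finset.sum_congr rfl fun i _ => hsq i
      _ ≤ 1 := by linarith
  -- pointwise Jensen
  have hmuI : ∀ i j, mu i j ∈ I := fun i j => hspec i ((hB i).eigenvalues_mem_spectrum_real j)
  have hpt : ∀ k, f (lam k) ≤ ∑ i, ∑ j, f (mu i j) * (G i j k)^2 := by
    intro k
    set w : Option (Fin n × Fin m) → ℝ :=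
      fun o => o.elim (1 - ∑ i, ∑ j, (G i j k)^2) (fun p => (G p.1 p.2 k)^2) with hw
    set p : Option (Fin n × Fin m) → ℝ := fun o => o.elim 0 (fun q => mu q.1 q.2) with hp
    have h₀ : ∀ o ∈ Finset.univ, 0 ≤ w o := by
      rintro (_ | ⟨i, j⟩) -
      · simpa [hw] using sub_nonneg.2 (hwt k)
      · simp only [hw, Option.elim]; positivity
    have h₁ : ∑ o, w o = 1 := by
      rw [Fintype.sum_option]
      simp [hw, Fintype.sum_prod_type]
    have hmem : ∀ o ∈ Finset.univ, p o ∈ I := by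
      rintro (_ | ⟨i, j⟩) -
      · exact h0
      · exact hmuI i j
    have := hconv.map_sum_le h₀ h₁ hmem
    have hsum' : ∑ o, w o • p o = lam k := by
      rw [Fintype.sum_option]
      simp only [hw, hp, Option.elim, smul_eq_mul, mul_zero, zero_add]
      rw [hlam k, Fintype.sum_prod_type]
      exact Finset.sum_congr rfl fun i _ => Finset.sum_congr rfl fun j _ => by ring
    rw [hsum'] at this
    refine this.trans ?_
    rw [Fintype.sum_option]
    have hneg : w none * f (p none) ≤ 0 :=
      mul_nonpos_of_nonneg_of_nonpos (by simpa [hw] using sub_nonneg.2 (hwt k))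
        (by simpa [hp] using hf0)
    calc w none * f (p none) + ∑ q : Fin n × Fin m, w (some q) * f (p (some q))
        ≤ ∑ q : Fin n × Fin m, w (some q) * f (p (some q)) := by linarith
      _ = ∑ i, ∑ j, f (mu i j) * (G i j k)^2 := by
          rw [Fintype.sum_prod_type]
          exact Finset.sum_congr rfl fun i _ => Finset.sum_congr rfl fun j _ => by
            simp [hw, hp]; ring
  -- RHS trace
  have hRHS : (∑ i, (A i)ᵀ * (hB i).cfc f * A i).trace
      = ∑ k, ∑ i, ∑ j, f (mu i j) * (G i j k)^2 := by
    rw [trace_sum]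
    rw [Finset.sum_comm]
    refine Finset.sum_congr rfl fun i _ => ?_
    have h1 : ∀ X : Matrix (Fin m) (Fin m) ℝ, (star U * X * U).trace = X.trace := by
      intro X
      rw [trace_mul_cycle, hUU', Matrix.one_mul]
    rw [← h1 ((A i)ᵀ * (hB i).cfc f * A i)]
    have h2 : star U * ((A i)ᵀ * (hB i).cfc f * A i) * U
        = star (G i) * (diagonal (f ∘ mu i) * G i) := by
      show star U * ((A i)ᵀ * (V i * diagonal (RCLike.ofReal ∘ f ∘ mu i) * star (V i)) * A i) * U = _
      exact key i (f ∘ mu i)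
    rw [h2]
    rw [Matrix.trace]
    exact Finset.sum_congr rfl fun k _ => entry (G i) (f ∘ mu i) k
  rw [hLHS, hRHS]
  exact Finset.sum_le_sum fun k _ => hpt k
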